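/- Monotonicity of the generalized Gauss–Bonnet Hawking mass (Proposition 3.2). Let n ≥ 3, λ ≥ 0, α > 0, α̃ = (n−2)(n−3)·α, r₊ > 0, and let V, k_I, k_S be spherically symmetric radial data on [r₊,∞) satisfying the radial Gauss–Bonnet constraints with matter energy density μ̃ and radial momentum density J̃_ν. Assume the dominant energy condition μ̃(r) ≥ |J̃_ν(r)| for all r > r₊ and the outermost condition H(r) > |k_S(r)| for all r > r₊. Then m_GB is non-decreasing on [r₊,∞): for all r₊ ≤ r₁ ≤ r₂, m_GB(r₁) ≤ m_GB(r₂) (assuming m_GB is continuous at r₊). -/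

import Mathlib

open Real Filter

/-- Mean curvature of the coordinate sphere of radius `r`: `H = (n-1)√(V r)/r`. -/
noncomputable def sphMeanCurv (n : ℕ) (V : ℝ → ℝ) (r : ℝ) : ℝ :=
  ((n : ℝ) - 1) * Real.sqrt (V r) / r

/-- Scalar curvature of `g = V⁻¹dr² + r²·(round metric)`:
`R = (n-1) r^{1-n} (d/dr)[r^{n-2}(1 - V)]`. -/
noncomputable def sphScalCurv (n : ℕ) (V : ℝ → ℝ) (r : ℝ) : ℝ :=
  ((n : ℝ) - 1) / r ^ (n - 1) * deriv (fun ρ => ρ ^ (n - 2) * (1 - V ρ)) r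

/-- The Hawking mass `m_H(r) = (r^{n-2}/2)[1 - V + r² k_S²/(n-1)²]`. -/
noncomputable def hawkingMass (n : ℕ) (V kS : ℝ → ℝ) (r : ℝ) : ℝ :=
  r ^ (n - 2) / 2 * (1 - V r + r ^ 2 * kS r ^ 2 / ((n : ℝ) - 1) ^ 2)

/-- The generalized Gauss–Bonnet Hawking mass
`m_GB(r) = m_H(r) + λ r^n/2 + 2 α̃ m_H(r)²/r^n`. -/
noncomputable def gbHawkingMass (n : ℕ) (lam ta : ℝ) (V kS : ℝ → ℝ) (r : ℝ) : ℝ :=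
  hawkingMass n V kS r + lam * r ^ n / 2 + 2 * ta * (hawkingMass n V kS r) ^ 2 / r ^ n

/-- `N₁ = H·[k_I - k_S/(n-1) - r k_S'/(n-1)]`. -/
noncomputable def gbN1 (n : ℕ) (V kI kS : ℝ → ℝ) (r : ℝ) : ℝ :=
  sphMeanCurv n V r *
    (kI r - kS r / ((n : ℝ) - 1) - r * deriv kS r / ((n : ℝ) - 1))

/-- `𝓜 = R + (k_I + k_S)² - k_I² - k_S²/(n-1)`. -/
noncomputable def gbM (n : ℕ) (V kI kS : ℝ → ℝ) (r : ℝ) : ℝ :=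
  sphScalCurv n V r + (kI r + kS r) ^ 2 - kI r ^ 2 - kS r ^ 2 / ((n : ℝ) - 1)

/-- `μ̃⁽ᵅ⁾ = (n-1)(n-2)(n-3)·(8 m_H/r^n)·[m_H'/r^{n-1} - n m_H/(2 r^n) + (k_S/(n-1)) N₁/H]`. -/
noncomputable def gbMuAlpha (n : ℕ) (V kI kS : ℝ → ℝ) (r : ℝ) : ℝ :=
  ((n : ℝ) - 1) * ((n : ℝ) - 2) * ((n : ℝ) - 3) * (8 * hawkingMass n V kS r / r ^ n) *
    (deriv (hawkingMass n V kS) r / r ^ (n - 1)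
      - (n : ℝ) * hawkingMass n V kS r / (2 * r ^ n)
      + kS r / ((n : ℝ) - 1) * gbN1 n V kI kS r / sphMeanCurv n V r)

/-- `J̃⁽ᵅ⁾_ν = 2 N₁ (n-2)(n-3) m_H/r^n`. -/
noncomputable def gbJAlpha (n : ℕ) (V kI kS : ℝ → ℝ) (r : ℝ) : ℝ :=
  2 * gbN1 n V kI kS r * ((n : ℝ) - 2) * ((n : ℝ) - 3) * hawkingMass n V kS r / r ^ n

set_option maxHeartbeats 2000000 in
/-- Monotonicity of the generalized Gauss–Bonnet Hawking mass (Proposition 3.2): under the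
radial Gauss–Bonnet constraints, the dominant energy condition `μ̃ ≥ |J̃_ν|` and the
outermost condition `H > |k_S|`, the mass `m_GB` is non-decreasing on `[r₊, ∞)`. -/
theorem gbHawkingMass_monotone (n : ℕ) (hn : 3 ≤ n) (lam α ta rp : ℝ) (hlam : 0 ≤ lam)
    (hα : 0 < α) (hta : ta = ((n : ℝ) - 2) * ((n : ℝ) - 3) * α) (hrp : 0 < rp)
    (V kI kS μ J : ℝ → ℝ)
    (hVpos : ∀ r, rp < r → 0 < V r)
    (hVd : ∀ r, rp < r → DifferentiableAt ℝ V r)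
    (hkSd : ∀ r, rp < r → DifferentiableAt ℝ kS r)
    (hmHd : ∀ r, rp < r → DifferentiableAt ℝ (hawkingMass n V kS) r)
    -- Gauss–Bonnet Hamiltonian constraint
    (hmu : ∀ r, rp < r → 16 * π * μ r =
      gbM n V kI kS r + (n : ℝ) * ((n : ℝ) - 1) * lam + α * gbMuAlpha n V kI kS r)
    -- Gauss–Bonnet momentum constraint
    (hJ : ∀ r, rp < r → 8 * π * J r = gbN1 n V kI kS r + 2 * α * gbJAlpha n V kI kS r)
    -- dominant energy condition
    (hDEC : ∀ r, rp < r → |J r| ≤ μ r)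
    -- outermost condition
    (hout : ∀ r, rp < r → |kS r| < sphMeanCurv n V r)
    -- continuity of `m_GB` at the horizon `r = rp`
    (hcont : ContinuousWithinAt (gbHawkingMass n lam ta V kS) (Set.Ici rp) rp) :
    ∀ r₁ r₂ : ℝ, rp ≤ r₁ → r₁ ≤ r₂ →
      gbHawkingMass n lam ta V kS r₁ ≤ gbHawkingMass n lam ta V kS r₂ := by

  obtain ⟨p, rfl⟩ : ∃ p, n = p + 3 := ⟨n - 3, by omega⟩
  have hcast : (0:ℝ) ≤ (p:ℝ) := Nat.cast_nonneg p
  have hc0 : (0:ℝ) < ((p+3:ℕ):ℝ) - 1 := by push_cast; linarith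
  have hkey : ∀ r, rp < r → 0 ≤ deriv (gbHawkingMass (p + 3) lam ta V kS) r := by
    intro r hr
    have hx0 : (0:ℝ) < r := hrp.trans hr
    have hxne : r ≠ 0 := ne_of_gt hx0
    have hv : 0 < V r := hVpos r hr
    have hs0 : 0 < Real.sqrt (V r) := Real.sqrt_pos.mpr hv
    have hV' : HasDerivAt V (deriv V r) r := (hVd r hr).hasDerivAt
    have hK' : HasDerivAt kS (deriv kS r) r := (hkSd r hr).hasDerivAt
    have hmraw := ((hasDerivAt_pow (p+1) r).div_const 2).mul
      (((hasDerivAt_const r (1:ℝ)).sub hV').add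
        (((hasDerivAt_pow 2 r).mul (hK'.pow 2)).div_const ((((p+3:ℕ):ℝ) - 1)^2)))
    have hm : HasDerivAt (hawkingMass (p+3) V kS) _ r := hmraw
    have hg : HasDerivAt (gbHawkingMass (p+3) lam ta V kS) _ r :=
      (hm.add (((hasDerivAt_pow (p+3) r).const_mul lam).div_const 2)).add
        (((hm.pow 2).const_mul (2*ta)).div (hasDerivAt_pow (p+3) r) (pow_ne_zero _ hxne))
    have hRd : deriv (fun ρ : ℝ => ρ ^ (p+1) * (1 - V ρ)) r = _ := ((hasDerivAt_pow (p+1) r).mul ((hasDerivAt_const r (1:ℝ)).sub hV')).deriv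
    have hH0 : 0 < sphMeanCurv (p+3) V r := by
      simp only [sphMeanCurv]
      exact div_pos (mul_pos hc0 hs0) hx0
    have hJb : |kS r / sphMeanCurv (p+3) V r * J r| ≤ μ r := by
      rw [abs_mul, abs_div, abs_of_pos hH0]
      have h1 : |kS r| / sphMeanCurv (p+3) V r ≤ 1 :=
        (div_le_one hH0).mpr (hout r hr).le
      calc |kS r| / sphMeanCurv (p+3) V r * |J r| ≤ 1 * |J r| :=
            mul_le_mul_of_nonneg_right h1 (abs_nonneg _)
        _ ≤ μ r := by rw [one_mul]; exact hDEC r hr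
    have h2 : kS r / sphMeanCurv (p+3) V r * J r ≤ μ r :=
      le_trans (le_abs_self _) hJb
    have hQ : 0 ≤ 16 * π * μ r - 2 * kS r / sphMeanCurv (p+3) V r * (8 * π * J r) := by
      have h3 : 2 * kS r / sphMeanCurv (p+3) V r * (8 * π * J r)
          = 16 * π * (kS r / sphMeanCurv (p+3) V r * J r) := by ring
      have h4 := mul_le_mul_of_nonneg_left h2 (by positivity : (0:ℝ) ≤ 16 * π)
      rw [h3]; linarith
    have hpos : (0:ℝ) ≤ r ^ (p+2) / (2 * (((p+3:ℕ):ℝ) - 1)) :=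
      div_nonneg (pow_nonneg hx0.le _) (by linarith)
    calc (0:ℝ) ≤ r ^ (p+2) / (2 * (((p+3:ℕ):ℝ) - 1)) *
          (16 * π * μ r - 2 * kS r / sphMeanCurv (p+3) V r * (8 * π * J r)) :=
          mul_nonneg hpos hQ
      _ = deriv (gbHawkingMass (p+3) lam ta V kS) r := by
          rw [hg.deriv, hmu r hr, hJ r hr, hta]
          simp only [gbM, gbMuAlpha, gbJAlpha, gbN1, sphScalCurv, sphMeanCurv,
            show p+3-2 = p+1 from rfl, show p+3-1 = p+2 from rfl,
            show p+1-1 = p from rfl, show 2-1 = 1 from rfl, pow_one]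
          rw [hm.deriv, hRd]
          simp only [show p+1-1 = p from rfl, show 2-1 = 1 from rfl, pow_one, Pi.add_apply, Pi.sub_apply, Pi.mul_apply, Pi.pow_apply, Pi.div_apply]
          have hcc : ((p:ℝ) + 3 - 1) ≠ 0 := by push_cast at hc0; linarith
          push_cast
          field_simp [hxne, hs0.ne', hcc]
          ring
  have hdiffAt : ∀ x, rp < x → DifferentiableAt ℝ (gbHawkingMass (p+3) lam ta V kS) x := by
    intro x hx
    have hx0 : x ≠ 0 := ne_of_gt (hrp.trans hx)
    have hmx := hmHd x hx
    have h : DifferentiableAt ℝ (fun ρ => hawkingMass (p+3) V kS ρ + lam * ρ^(p+3)/2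
        + 2*ta*(hawkingMass (p+3) V kS ρ)^2/ρ^(p+3)) x :=
      (hmx.add (((differentiableAt_pow (p+3)).const_mul lam).div_const 2)).add
        (((hmx.pow 2).const_mul (2*ta)).div (differentiableAt_pow (p+3)) (pow_ne_zero _ hx0))
    exact h
  have hcontOn : ContinuousOn (gbHawkingMass (p+3) lam ta V kS) (Set.Ici rp) := by
    intro x hx
    rcases eq_or_lt_of_le (Set.mem_Ici.mp hx) with h | h
    · rw [← h]; exact hcont
    · exact ((hdiffAt x h).continuousAt).continuousWithinAt
  have hmono : MonotoneOn (gbHawkingMass (p+3) lam ta V kS) (Set.Ici rp) := by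
    apply monotoneOn_of_deriv_nonneg (convex_Ici rp) hcontOn
    · intro x hx
      rw [interior_Ici] at hx
      exact (hdiffAt x hx).differentiableWithinAt
    · intro x hx
      rw [interior_Ici] at hx
      exact hkey x hx
  intro r₁ r₂ h1 h12
  exact hmono h1 (h1.trans h12) h12
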